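/- Let D ⊆ ℂ^d be a starlike circular domain containing the origin (i.e., tz ∈ D for all z ∈ D and t ∈ [0,1], and e^{iθ}z ∈ D for all θ ∈ ℝ). If D is Kobayashi hyperbolic, then D is bounded. -/

import Mathlib

open Metric Set Filter Complex

/-- The inverse hyperbolic tangent: `arctanh r = (1/2) · log ((1+r)/(1-r))`. -/
noncomputable def arctanh (r : ℝ) : ℝ := (1 / 2) * Real.log ((1 + r) / (1 - r))

/-- The Poincaré distance on the unit disk: `ρ(a,b) = arctanh |(a-b)/(1 - conj a · b)|`. -/
noncomputable def diskDist (a b : ℂ) : ℝ :=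
  arctanh ‖(a - b) / (1 - (starRingEnd ℂ) a * b)‖


lemma arctanh_nonneg {r : ℝ} (hr : 0 ≤ r) : 0 ≤ arctanh r := by
  unfold arctanh
  have : 0 ≤ Real.log ((1 + r) / (1 - r)) := by
    rcases lt_trichotomy r 1 with h | h | h
    · exact Real.log_nonneg ((one_le_div (by linarith)).2 (by linarith))
    · simp [h]
    · rw [show (1:ℝ)-r = -(r-1) by ring, div_neg, Real.log_neg_eq_log]
      exact Real.log_nonneg ((one_le_div (by linarith)).2 (by linarith))
  linarith

lemma arctanh_zero : arctanh 0 = 0 := by simp [arctanh]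

lemma arctanh_continuousAt : ContinuousAt arctanh 0 := by
  unfold arctanh
  apply ContinuousAt.mul continuousAt_const
  apply (Real.continuousAt_log (by norm_num)).comp
  exact ((continuousAt_const.add continuousAt_id).div
    (continuousAt_const.sub continuousAt_id) (by norm_num))

lemma diskDist_nonneg (a b : ℂ) : 0 ≤ diskDist a b :=
  arctanh_nonneg (norm_nonneg _)

lemma diskDist_zero_real {x : ℝ} (hx : 0 ≤ x) : diskDist 0 (x : ℂ) = arctanh x := by
  simp [diskDist, _root_.abs_of_nonneg hx]

/-- The Kobayashi pseudodistance of a domain `D ⊆ ℂ^d`: the infimum, over chains of analytic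
discs joining `p` to `q` within `D`, of the sums of Poincaré distances of the parameters. -/
noncomputable def kobayashiDist {d : ℕ} (D : Set (EuclideanSpace ℂ (Fin d)))
    (p q : EuclideanSpace ℂ (Fin d)) : ℝ :=
  sInf {r : ℝ | ∃ (n : ℕ) (φ : Fin (n + 1) → ℂ → EuclideanSpace ℂ (Fin d))
      (a b : Fin (n + 1) → ℂ),
    (∀ i, DifferentiableOn ℂ (φ i) (ball (0 : ℂ) 1) ∧ MapsTo (φ i) (ball (0 : ℂ) 1) D ∧
      a i ∈ ball (0 : ℂ) 1 ∧ b i ∈ ball (0 : ℂ) 1) ∧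
    φ 0 (a 0) = p ∧ φ (Fin.last n) (b (Fin.last n)) = q ∧
    (∀ i : Fin n, φ i.castSucc (b i.castSucc) = φ i.succ (a i.succ)) ∧
    r = ∑ i, diskDist (a i) (b i)}

/-- A domain is Kobayashi hyperbolic if its Kobayashi pseudodistance is a true distance,
i.e. positive off the diagonal. -/
def KobayashiHyperbolic {d : ℕ} (D : Set (EuclideanSpace ℂ (Fin d))) : Prop :=
  ∀ p ∈ D, ∀ q ∈ D, p ≠ q → 0 < kobayashiDist D p q

set_option maxHeartbeats 1000000 in
/-- Kodama's theorem: a starlike circular domain `D ⊆ ℂ^d` containing the origin that is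
Kobayashi hyperbolic is bounded. -/
theorem stmt17 {d : ℕ} (D : Set (EuclideanSpace ℂ (Fin d)))
    (hD : IsOpen D) (hDconn : IsConnected D) (h0 : (0 : EuclideanSpace ℂ (Fin d)) ∈ D)
    (hstar : ∀ z ∈ D, ∀ t : ℝ, t ∈ Icc (0 : ℝ) 1 → (t : ℂ) • z ∈ D)
    (hcirc : ∀ z ∈ D, ∀ θ : ℝ, Complex.exp ((θ : ℂ) * Complex.I) • z ∈ D)
    (hhyp : KobayashiHyperbolic D) :
    Bornology.IsBounded D := by
  by_contra hb
  rw [isBounded_iff_forall_norm_le] at hb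
  push_neg at hb
  obtain ⟨r, hr, hball⟩ := Metric.isOpen_iff.mp hD 0 h0
  choose zs hzsD hzs using fun n : ℕ => hb (n + r)
  have hzs_pos : ∀ n : ℕ, 0 < ‖zs n‖ := fun n =>
    lt_of_le_of_lt (by positivity) (hzs n)
  have hws_norm : ∀ n : ℕ,
      ‖((((r / 2) / ‖zs n‖ : ℝ)) : ℂ) • zs n‖ = r / 2 := by
    intro n
    have h1 : (0:ℝ) ≤ (r / 2) / ‖zs n‖ := by positivity
    rw [norm_smul, Complex.norm_real, Real.norm_eq_abs, _root_.abs_of_nonneg h1]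
    exact div_mul_cancel₀ _ (hzs_pos n).ne'
  have hws_mem : ∀ n : ℕ, ((((r / 2) / ‖zs n‖ : ℝ)) : ℂ) • zs n ∈
      sphere (0 : EuclideanSpace ℂ (Fin d)) (r / 2) := by
    intro n; rw [mem_sphere_zero_iff_norm]; exact hws_norm n
  obtain ⟨w, hw_sph, ν, hν_mono, hν_tendsto⟩ :=
    (isCompact_sphere (0 : EuclideanSpace ℂ (Fin d)) (r / 2)).tendsto_subseq hws_mem
  have hw_norm : ‖w‖ = r / 2 := mem_sphere_zero_iff_norm.mp hw_sph
  have hwD : w ∈ D := hball (by rw [mem_ball_zero_iff, hw_norm]; linarith)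
  have hw_ne : (0 : EuclideanSpace ℂ (Fin d)) ≠ w := by
    intro h; rw [← h] at hw_norm; simp at hw_norm; linarith
  obtain ⟨ε, hε⟩ : ∃ x : ℝ, x = kobayashiDist D 0 w := ⟨_, rfl⟩
  have hK : 0 < ε := hε ▸ hhyp 0 h0 w hwD hw_ne
  obtain ⟨δ, hδpos, hδ⟩ : ∃ δ > 0, ∀ x : ℝ, |x| < δ → |arctanh x| < ε / 2 := by
    obtain ⟨δ, hδpos, hδ⟩ :=
      Metric.continuousAt_iff.mp arctanh_continuousAt (ε / 2) (by linarith)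
    exact ⟨δ, hδpos, fun x hx => by
      have := hδ (x := x) (by simpa [Real.dist_eq] using hx)
      simpa [Real.dist_eq, arctanh_zero] using this⟩
  obtain ⟨δ', hδ'le, hδ'half, hδ'pos⟩ : ∃ x : ℝ, x ≤ δ ∧ x ≤ 1/2 ∧ 0 < x :=
    ⟨min δ (1/2), min_le_left _ _, min_le_right _ _, lt_min hδpos (by norm_num)⟩
  obtain ⟨N₁, hN₁⟩ := exists_nat_gt ((r / 2) / δ')
  have hev1 : ∀ᶠ k in atTop,
      ‖w - ((((r / 2) / ‖zs (ν k)‖ : ℝ)) : ℂ) • zs (ν k)‖ < r * δ' / 2 := by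
    have := hν_tendsto.eventually (Metric.ball_mem_nhds w (by positivity : 0 < r * δ' / 2))
    filter_upwards [this] with k hk
    rw [← dist_eq_norm, dist_comm]
    exact hk
  obtain ⟨k, hk1, hk2⟩ := (hev1.and (eventually_ge_atTop N₁)).exists
  have hmN : (N₁ : ℝ) ≤ (ν k : ℕ) := by exact_mod_cast le_trans hk2 (hν_mono.le_apply)
  have hz_big : (r / 2) / δ' < ‖zs (ν k)‖ := by
    calc (r/2)/δ' < (N₁ : ℝ) := hN₁
      _ ≤ ((ν k : ℕ) : ℝ) := hmN
      _ ≤ ((ν k : ℕ) : ℝ) + r := by linarith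
      _ < ‖zs (ν k)‖ := hzs (ν k)
  have hz_pos : 0 < ‖zs (ν k)‖ := hzs_pos (ν k)
  obtain ⟨b0, hb0⟩ : ∃ x : ℝ, x = (r / 2) / ‖zs (ν k)‖ := ⟨_, rfl⟩
  have hb0_pos : 0 < b0 := by rw [hb0]; positivity
  have hb0_lt : b0 < δ' := by
    rw [hb0, div_lt_iff₀ hz_pos]
    calc r / 2 = ((r/2)/δ') * δ' := (div_mul_cancel₀ _ hδ'pos.ne').symm
      _ < ‖zs (ν k)‖ * δ' := mul_lt_mul_of_pos_right hz_big hδ'pos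
      _ = δ' * ‖zs (ν k)‖ := by ring
  obtain ⟨t, htdef⟩ : ∃ x : ℝ, x = ‖w - ((b0 : ℝ) : ℂ) • zs (ν k)‖ := ⟨_, rfl⟩
  have ht_lt : t < r * δ' / 2 := by rw [htdef, hb0]; exact hk1
  have ht_nonneg : 0 ≤ t := htdef ▸ norm_nonneg _
  obtain ⟨β, hβ⟩ : ∃ x : ℝ, x = t / r + δ' / 2 := ⟨_, rfl⟩
  have htr : t / r < δ' / 2 := by rw [div_lt_iff₀ hr]; linarith [ht_lt]
  have hβpos : 0 < β := by rw [hβ]; positivity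
  have hβlt : β < δ' := by rw [hβ]; linarith
  have hβlt1 : β < 1 := by linarith
  have h2t : 2 * t < r * β := by
    have hrt : r * β = t + r * δ' / 2 := by
      rw [hβ, mul_add, show r * (t / r) = t from by field_simp]
      ring
    linarith
  have htβ : t / β ≤ r / 2 := by
    rw [div_le_div_iff₀ hβpos (by norm_num : (0:ℝ) < 2)]
    linarith
  have hwn_norm : ‖(((b0 : ℝ)) : ℂ) • zs (ν k)‖ = r / 2 := by
    rw [hb0]; exact hws_norm (ν k)
  -- notation
  set z : EuclideanSpace ℂ (Fin d) := zs (ν k) with hzdef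
  set wn : EuclideanSpace ℂ (Fin d) := (((b0 : ℝ)) : ℂ) • z with hwndef
  have hSmem : (diskDist 0 (b0 : ℂ) + diskDist 0 (β : ℂ)) ∈
      {x : ℝ | ∃ (n : ℕ) (φ : Fin (n + 1) → ℂ → EuclideanSpace ℂ (Fin d))
          (a b : Fin (n + 1) → ℂ),
        (∀ i, DifferentiableOn ℂ (φ i) (ball (0 : ℂ) 1) ∧ MapsTo (φ i) (ball (0 : ℂ) 1) D ∧
          a i ∈ ball (0 : ℂ) 1 ∧ b i ∈ ball (0 : ℂ) 1) ∧
        φ 0 (a 0) = 0 ∧ φ (Fin.last n) (b (Fin.last n)) = w ∧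
        (∀ i : Fin n, φ i.castSucc (b i.castSucc) = φ i.succ (a i.succ)) ∧
        x = ∑ i, diskDist (a i) (b i)} := by
    refine ⟨1, ![fun ζ => ζ • z, fun ζ => wn + (ζ / (β : ℂ)) • (w - wn)],
      ![0, 0], ![(b0 : ℂ), (β : ℂ)], ?_, ?_, ?_, ?_, ?_⟩
    · rw [Fin.forall_fin_two]
      constructor
      · simp only [Matrix.cons_val_zero]
        refine ⟨(differentiable_id.smul_const z).differentiableOn, ?_, ?_, ?_⟩
        · intro ζ hζ
          rw [mem_ball_zero_iff] at hζ
          show ζ • z ∈ D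
          have key : ζ • z
              = ((‖ζ‖ : ℝ) : ℂ) • (Complex.exp ((ζ.arg : ℂ) * Complex.I) • z) := by
            rw [smul_smul, Complex.norm_mul_exp_arg_mul_I]
          rw [key]
          exact hstar _ (hcirc z (hzsD (ν k)) ζ.arg) ‖ζ‖
            ⟨norm_nonneg _, le_of_lt hζ⟩
        · simp
        · rw [mem_ball_zero_iff, Complex.norm_real, Real.norm_eq_abs,
            _root_.abs_of_nonneg hb0_pos.le]
          linarith
      · simp only [Matrix.cons_val_one, Matrix.head_cons, Matrix.cons_val_zero]
        refine ⟨((differentiable_const _).add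
            ((differentiable_id.div_const _).smul_const _)).differentiableOn, ?_, ?_, ?_⟩
        · intro ζ hζ
          rw [mem_ball_zero_iff] at hζ
          show wn + (ζ / (β : ℂ)) • (w - wn) ∈ D
          apply hball
          rw [mem_ball_zero_iff]
          have hA : ‖(ζ / (β : ℂ)) • (w - wn)‖ = ‖ζ‖ / β * t := by
            rw [norm_smul, norm_div, Complex.norm_real, Real.norm_eq_abs,
              _root_.abs_of_nonneg hβpos.le, htdef]
          have h3 : ‖ζ‖ / β * t = ‖ζ‖ * (t / β) := by ring
          have h4 : ‖ζ‖ * (t / β) ≤ ‖ζ‖ * (r / 2) :=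
            mul_le_mul_of_nonneg_left htβ (norm_nonneg _)
          have h5 : ‖ζ‖ * (r / 2) < 1 * (r / 2) :=
            mul_lt_mul_of_pos_right hζ (by linarith)
          calc ‖wn + (ζ / (β : ℂ)) • (w - wn)‖
              ≤ ‖wn‖ + ‖(ζ / (β : ℂ)) • (w - wn)‖ := norm_add_le _ _
            _ = r/2 + ‖ζ‖ / β * t := by rw [hwn_norm, hA]
            _ < r/2 + 1 * (r/2) := by linarith
            _ = r := by ring
        · simp
        · rw [mem_ball_zero_iff, Complex.norm_real, Real.norm_eq_abs,
            _root_.abs_of_nonneg hβpos.le]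
          linarith
    · show (0 : ℂ) • z = 0
      rw [zero_smul]
    · show wn + (((β : ℝ) : ℂ) / ((β : ℝ) : ℂ)) • (w - wn) = w
      rw [div_self (by exact_mod_cast hβpos.ne' : ((β : ℝ) : ℂ) ≠ 0), one_smul,
        add_sub_cancel]
    · rw [Fin.forall_fin_one]
      show ((b0 : ℝ) : ℂ) • z = wn + (((0:ℂ)) / ((β : ℝ) : ℂ)) • (w - wn)
      rw [zero_div, zero_smul, add_zero, hwndef]
    · rw [Fin.sum_univ_two]
      simp
  have hBdd : BddBelow {x : ℝ | ∃ (n : ℕ) (φ : Fin (n + 1) → ℂ → EuclideanSpace ℂ (Fin d))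
          (a b : Fin (n + 1) → ℂ),
        (∀ i, DifferentiableOn ℂ (φ i) (ball (0 : ℂ) 1) ∧ MapsTo (φ i) (ball (0 : ℂ) 1) D ∧
          a i ∈ ball (0 : ℂ) 1 ∧ b i ∈ ball (0 : ℂ) 1) ∧
        φ 0 (a 0) = 0 ∧ φ (Fin.last n) (b (Fin.last n)) = w ∧
        (∀ i : Fin n, φ i.castSucc (b i.castSucc) = φ i.succ (a i.succ)) ∧
        x = ∑ i, diskDist (a i) (b i)} := by
    refine ⟨0, fun x hx => ?_⟩
    obtain ⟨n, φ', a, b, _, _, _, _, hsum⟩ := hx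
    rw [hsum]
    exact Finset.sum_nonneg fun i _ => diskDist_nonneg _ _
  have hle : ε ≤ diskDist 0 (b0 : ℂ) + diskDist 0 (β : ℂ) := by
    rw [hε]
    exact csInf_le hBdd hSmem
  have h1 : diskDist 0 (b0 : ℂ) < ε / 2 := by
    rw [diskDist_zero_real hb0_pos.le]
    have := hδ b0 (by rw [_root_.abs_of_nonneg hb0_pos.le]; linarith)
    exact lt_of_le_of_lt (le_abs_self _) this
  have h2 : diskDist 0 (β : ℂ) < ε / 2 := by
    rw [diskDist_zero_real hβpos.le]
    have := hδ β (by rw [_root_.abs_of_nonneg hβpos.le]; linarith)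
    exact lt_of_le_of_lt (le_abs_self _) this
  linarith
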